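/- Let E and F be dyadic wavelet sets and let G be a dyadic wavelet set with G ⊆ E ∪ F modulo null sets. Then E ∩ F ⊆ G modulo Lebesgue-null sets. -/

import Mathlib

open MeasureTheory Set
open scoped Real symmDiff

noncomputable section

/-- An a.e. (modulo Lebesgue-null sets) partition of the set `A` by the family `P`. -/
def IsAEPartition {ι : Type*} (P : ι → Set ℝ) (A : Set ℝ) : Prop :=
  volume (A ∆ (⋃ i, P i)) = 0 ∧ ∀ i j : ι, i ≠ j → volume (P i ∩ P j) = 0

/-- `E ⊆ ℝ` is a dyadic wavelet set: its `2πℤ`-translates and its `2ℤ`-dilates each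
partition `ℝ` modulo Lebesgue-null sets. -/
def IsDyadicWaveletSet (E : Set ℝ) : Prop :=
  MeasurableSet E ∧
  (∀ᵐ x : ℝ ∂volume, ∃! n : ℤ, x + 2 * Real.pi * n ∈ E) ∧
  (∀ᵐ x : ℝ ∂volume, ∃! k : ℤ, (2 : ℝ) ^ k * x ∈ E)

/-- `σ` is (a representative of) the interpolation map `σ_E^F` for wavelet sets `E, F`. -/
def IsInterpolationMap (E F : Set ℝ) (σ : ℝ → ℝ) : Prop :=
  Measurable σ ∧ σ 0 = 0 ∧
  (∀ᵐ s : ℝ ∂volume, s ∈ E → σ s ∈ F ∧ ∃ n : ℤ, σ s - s = 2 * Real.pi * n) ∧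
  (∀ n : ℤ, ∀ᵐ s : ℝ ∂volume, (2 : ℝ) ^ (-n) * s ∈ E →
    σ s = (2 : ℝ) ^ n * σ ((2 : ℝ) ^ (-n) * s))

/-- The `2π`-congruence domain of a map `σ`. -/
def CongruenceDomain (σ : ℝ → ℝ) : Set ℝ :=
  {s : ℝ | ∃ n : ℤ, σ s - s = 2 * Real.pi * n}

/-- `A` is `2π`-translation congruent to `B`. -/
def TransCongruent (A B : Set ℝ) : Prop :=
  ∃ P : ℤ → Set ℝ, (∀ n, MeasurableSet (P n)) ∧ IsAEPartition P A ∧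
    IsAEPartition (fun (n : ℤ) => (fun x => x + 2 * Real.pi * (n : ℝ)) '' P n) B

/-- `A` is `2`-dilation congruent to `B`. -/
def DilCongruent (A B : Set ℝ) : Prop :=
  ∃ P : ℤ → Set ℝ, (∀ n, MeasurableSet (P n)) ∧ IsAEPartition P A ∧
    IsAEPartition (fun (n : ℤ) => (fun x => (2 : ℝ) ^ n * x) '' P n) B

/-- If `E, F, G` are dyadic wavelet sets and `G ⊆ E ∪ F` modulo
null sets, then `E ∩ F ⊆ G` modulo Lebesgue-null sets. -/
theorem stmt_2 (E F G : Set ℝ) (hE : IsDyadicWaveletSet E) (hF : IsDyadicWaveletSet F)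
    (hG : IsDyadicWaveletSet G) (hsub : volume (G \ (E ∪ F)) = 0) :
    volume ((E ∩ F) \ G) = 0 := by
  have htrans : ∀ n : ℤ, ∀ᵐ x : ℝ ∂volume, x + 2 * Real.pi * n ∉ G \ (E ∪ F) := by
    intro n
    have : volume ((fun x : ℝ => x + 2 * Real.pi * n) ⁻¹' (G \ (E ∪ F))) = 0 := by
      rw [measure_preimage_add_right]
      exact hsub
    rw [MeasureTheory.ae_iff]
    convert this using 2
    ext a
    simp [Set.mem_diff]
  have hall : ∀ᵐ x : ℝ ∂volume, ∀ n : ℤ, x + 2 * Real.pi * n ∉ G \ (E ∪ F) :=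
    (MeasureTheory.ae_all_iff).2 htrans
  have hmain : ∀ᵐ x : ℝ ∂volume, x ∉ (E ∩ F) \ G := by
    filter_upwards [hE.2.1, hF.2.1, hG.2.1, hall] with x hxE hxF hxG hx
    rintro ⟨⟨hE1, hF1⟩, hG1⟩
    obtain ⟨n, hn, -⟩ := hxG
    have hn0 : n ≠ 0 := by
      rintro rfl
      apply hG1
      simpa using hn
    have hmem : x + 2 * Real.pi * n ∈ E ∪ F := by
      have := hx n
      simp only [Set.mem_diff, not_and, not_not] at this
      exact this hn
    rcases hmem with h | h
    · obtain ⟨m, -, hmu⟩ := hxE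
      have h1 : n = m := hmu n h
      have h2 : (0 : ℤ) = m := hmu 0 (by simpa using hE1)
      exact hn0 (h1.trans h2.symm)
    · obtain ⟨m, -, hmu⟩ := hxF
      have h1 : n = m := hmu n h
      have h2 : (0 : ℤ) = m := hmu 0 (by simpa using hF1)
      exact hn0 (h1.trans h2.symm)
  exact MeasureTheory.measure_eq_zero_iff_ae_notMem.2 hmain
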